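/- Let A(t) be a continuous T-periodic K×K real matrix-valued function which is cooperative and strongly irreducible, and let U : ℝ → (K×K real matrices) be the fundamental matrix solution of U′(t) = A(t)U(t), U(0) = I. Let r be the spectral radius of the monodromy matrix U(T). Then r > 0, there exists a vector v ∈ ℝ^K with all components strictly positive such that U(T)v = r v, and, setting λ = (1/T) ln r, the function φ(t) = e^{−λt} U(t) v is T-periodic, has all components strictly positive for every t, and satisfies −φ′(t) + A(t)φ(t) = λφ(t) for all t ∈ ℝ. -/

import Mathlib

open Matrix Set Filter Topology
open scoped ENNReal NNReal

lemma abound {K : ℕ} (A : ℝ → Matrix (Fin K) (Fin K) ℝ)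
    (hAcont : ∀ k j, Continuous fun t => A t k j) (a b : ℝ) :
    ∃ M : ℝ, 0 ≤ M ∧ ∀ t ∈ Icc a b, ∀ k j, |A t k j| ≤ M := by
  have hf : Continuous (fun t => (fun p : Fin K × Fin K => A t p.1 p.2)) :=
    continuous_pi fun p => hAcont p.1 p.2
  obtain ⟨C, hC⟩ := (isCompact_Icc (a := a) (b := b)).exists_bound_of_continuousOn
    hf.continuousOn
  refine ⟨max C 0, le_max_right _ _, fun t ht k j => ?_⟩
  calc |A t k j| = ‖(fun p : Fin K × Fin K => A t p.1 p.2) (k, j)‖ := rfl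
    _ ≤ ‖fun p : Fin K × Fin K => A t p.1 p.2‖ :=
      norm_le_pi_norm (fun p : Fin K × Fin K => A t p.1 p.2) (k, j)
    _ ≤ C := hC t ht
    _ ≤ max C 0 := le_max_left _ _

lemma sol_nonneg {K : ℕ} {A : ℝ → Matrix (Fin K) (Fin K) ℝ}
    (hAcont : ∀ k j, Continuous fun t => A t k j)
    (hAcoop : ∀ t, ∀ k j : Fin K, k ≠ j → 0 ≤ A t k j)
    {x : ℝ → Fin K → ℝ}
    (hx : ∀ t k, HasDerivAt (fun s => x s k) ((A t).mulVec (x t) k) t)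
    {b : ℝ} (h0 : ∀ k, 0 ≤ x 0 k) :
    ∀ t ∈ Icc (0:ℝ) b, ∀ k, 0 ≤ x t k := by
  obtain ⟨M, hM0, hM⟩ := abound A hAcont 0 b
  set L : ℝ := K * M + 1 with hL
  have hxc : ∀ k, Continuous fun t => x t k :=
    fun k => continuous_iff_continuousAt.2 fun t => (hx t k).continuousAt
  have key : ∀ ε : ℝ, 0 < ε → ∀ t ∈ Icc (0:ℝ) b, ∀ k, 0 < x t k + ε * Real.exp (L * t) := by
    intro ε hε
    by_contra hcon
    push_neg at hcon
    obtain ⟨t', ht', k', hk'⟩ := hcon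
    set y : ℝ → Fin K → ℝ := fun t k => x t k + ε * Real.exp (L * t) with hy
    have hyc : ∀ k, Continuous fun t => y t k := fun k =>
      (hxc k).add (continuous_const.mul (Real.continuous_exp.comp
        (continuous_const.mul continuous_id)))
    set Sbad : Set ℝ := Icc 0 b ∩ (⋃ k, {t | y t k ≤ 0}) with hSbad
    have hclosed : IsClosed Sbad :=
      isClosed_Icc.inter (isClosed_iUnion_of_finite fun k =>
        isClosed_le (hyc k) continuous_const)
    have hne : Sbad.Nonempty := ⟨t', ht', mem_iUnion.2 ⟨k', hk'⟩⟩
    have hbdd : BddBelow Sbad := ⟨0, fun s hs => hs.1.1⟩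
    set t₀ : ℝ := sInf Sbad with ht₀def
    have ht₀ : t₀ ∈ Sbad := hclosed.csInf_mem hne hbdd
    obtain ⟨ht₀I, hk⟩ := ht₀
    rw [mem_iUnion] at hk
    obtain ⟨k, hk⟩ := hk
    have h0pos : ∀ j, 0 < y 0 j := by
      intro j
      have : y 0 j = x 0 j + ε := by simp [hy]
      rw [this]; linarith [h0 j]
    have t₀pos : 0 < t₀ := by
      rcases eq_or_lt_of_le ht₀I.1 with h | h
      · exfalso; rw [← h] at hk; exact absurd hk (not_le.2 (h0pos k))
      · exact h
    have hgood : ∀ t, 0 ≤ t → t < t₀ → ∀ j, 0 < y t j := by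
      intro t htnn htlt j
      by_contra hc
      push_neg at hc
      have : t ∈ Sbad := ⟨⟨htnn, htlt.le.trans ht₀I.2⟩, mem_iUnion.2 ⟨j, hc⟩⟩
      exact absurd (csInf_le hbdd this) (not_le.2 htlt)
    have hy0 : ∀ j, 0 ≤ y t₀ j := by
      intro j
      refine ge_of_tendsto (((hyc j).tendsto t₀).mono_left
        (nhdsWithin_le_nhds : 𝓝[<] t₀ ≤ 𝓝 t₀)) ?_
      have h1 : ∀ᶠ t in 𝓝[<] t₀, t ∈ Ioi (0:ℝ) :=
        eventually_nhdsWithin_of_eventually_nhds (Ioi_mem_nhds t₀pos)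
      have h2 : ∀ᶠ t in 𝓝[<] t₀, t < t₀ := eventually_mem_nhdsWithin
      filter_upwards [h1, h2] with t ha hb'
      exact (hgood t (le_of_lt ha) hb' j).le
    have hyk0 : y t₀ k = 0 := le_antisymm hk (hy0 k)
    set e : ℝ := Real.exp (L * t₀) with he
    have hepos : 0 < e := Real.exp_pos _
    have hder : HasDerivAt (fun t => y t k)
        ((A t₀).mulVec (x t₀) k + ε * (e * (L * 1))) t₀ :=
      (hx t₀ k).add ((((hasDerivAt_id t₀).const_mul L).exp).const_mul ε)
    have hxy : ∀ j, x t₀ j = y t₀ j - ε * e := by intro j; simp [hy, he]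
    have hS1 : 0 ≤ ∑ j, A t₀ k j * y t₀ j := by
      refine Finset.sum_nonneg fun j _ => ?_
      rcases eq_or_ne j k with h | h
      · subst h; rw [hyk0, mul_zero]
      · exact mul_nonneg (hAcoop t₀ k j (Ne.symm h)) (hy0 j)
    have hS2 : ∑ j, A t₀ k j * (ε * e) ≤ K * (M * (ε * e)) := by
      have : ∀ j ∈ Finset.univ, A t₀ k j * (ε * e) ≤ M * (ε * e) := by
        intro j _
        exact mul_le_mul_of_nonneg_right
          ((le_abs_self _).trans (hM t₀ ht₀I k j)) (by positivity)
      calc ∑ j, A t₀ k j * (ε * e) ≤ ∑ _j : Fin K, M * (ε * e) := Finset.sum_le_sum this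
        _ = K * (M * (ε * e)) := by simp [Finset.sum_const, mul_comm]
    have hd1 : (A t₀).mulVec (x t₀) k = ∑ j, A t₀ k j * y t₀ j - ∑ j, A t₀ k j * (ε * e) := by
      rw [← Finset.sum_sub_distrib]
      simp only [Matrix.mulVec, dotProduct]
      exact Finset.sum_congr rfl fun j _ => by rw [hxy j]; ring
    have dpos : 0 < (A t₀).mulVec (x t₀) k + ε * (e * (L * 1)) := by
      rw [hd1, hL]
      have : 0 < ε * e := by positivity
      nlinarith [hS1, hS2]
    have hslope := hasDerivAt_iff_tendsto_slope.1 hder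
    have hev : ∀ᶠ t in 𝓝[≠] t₀, 0 < slope (fun t => y t k) t₀ t :=
      hslope.eventually (lt_mem_nhds dpos)
    have hmono : 𝓝[<] t₀ ≤ 𝓝[≠] t₀ :=
      nhdsWithin_mono _ (fun t (ht : t ∈ Iio t₀) => ne_of_lt ht)
    have hev2 : ∀ᶠ t in 𝓝[<] t₀, 0 < slope (fun t => y t k) t₀ t := hev.filter_mono hmono
    have h1 : ∀ᶠ t in 𝓝[<] t₀, t ∈ Ioi (0:ℝ) :=
      eventually_nhdsWithin_of_eventually_nhds (Ioi_mem_nhds t₀pos)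
    have h2 : ∀ᶠ t in 𝓝[<] t₀, t < t₀ := eventually_mem_nhdsWithin
    obtain ⟨t, hts, htp, htlt⟩ := (hev2.and (h1.and h2)).exists
    rw [slope_def_field, hyk0, sub_zero] at hts
    rw [div_pos_iff] at hts
    have hden : t - t₀ < 0 := by linarith
    have hyneg : y t k < 0 := by
      rcases hts with ⟨_, h'⟩ | ⟨h', _⟩
      · linarith
      · exact h'
    exact absurd hyneg (not_lt.2 (hgood t (le_of_lt htp) htlt k).le)
  intro t ht k
  by_contra hneg
  push_neg at hneg
  have hε : 0 < -x t k / (2 * Real.exp (L * t)) := by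
    have : 0 < -x t k := by linarith
    positivity
  have h := key _ hε t ht k
  have heq : (-x t k / (2 * Real.exp (L * t))) * Real.exp (L * t) = -x t k / 2 := by
    field_simp
  rw [heq] at h
  linarith

section Chunk2

variable {K : ℕ} {A : ℝ → Matrix (Fin K) (Fin K) ℝ}

lemma sol_expMono
    (hAcoop : ∀ t, ∀ k j : Fin K, k ≠ j → 0 ≤ A t k j)
    {x : ℝ → Fin K → ℝ}
    (hx : ∀ t k, HasDerivAt (fun s => x s k) ((A t).mulVec (x t) k) t)
    {b M : ℝ} (hM : ∀ t ∈ Icc (0:ℝ) b, ∀ k j, |A t k j| ≤ M)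
    (hnn : ∀ t ∈ Icc (0:ℝ) b, ∀ k, 0 ≤ x t k) (k : Fin K) :
    MonotoneOn (fun t => Real.exp (M * t) * x t k) (Icc (0:ℝ) b) := by
  have hf : ∀ t, HasDerivAt (fun s => Real.exp (M * s) * x s k)
      (Real.exp (M * t) * (M * 1) * x t k + Real.exp (M * t) * ((A t).mulVec (x t) k)) t :=
    fun t => (((hasDerivAt_id t).const_mul M).exp).mul (hx t k)
  refine monotoneOn_of_deriv_nonneg (convex_Icc 0 b)
    (fun t _ => (hf t).continuousAt.continuousWithinAt)
    (fun t _ => (hf t).differentiableAt.differentiableWithinAt) ?_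
  intro t ht
  rw [interior_Icc] at ht
  have htI : t ∈ Icc (0:ℝ) b := ⟨ht.1.le, ht.2.le⟩
  rw [(hf t).deriv]
  have hsum : A t k k * x t k ≤ (A t).mulVec (x t) k := by
    have hrw : (A t).mulVec (x t) k = ∑ m, A t k m * x t m := rfl
    rw [hrw, ← Finset.add_sum_erase _ _ (Finset.mem_univ k)]
    have : 0 ≤ ∑ m ∈ Finset.univ.erase k, A t k m * x t m :=
      Finset.sum_nonneg fun m hm =>
        mul_nonneg (hAcoop t k m (Ne.symm (Finset.ne_of_mem_erase hm))) (hnn t htI m)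
    linarith
  have hMkk : -M ≤ A t k k := neg_le_of_abs_le (hM t htI k k)
  have hxk := hnn t htI k
  have he := Real.exp_pos (M * t)
  nlinarith [mul_le_mul_of_nonneg_left hsum he.le,
    mul_nonneg (mul_nonneg he.le (by linarith : (0:ℝ) ≤ M + A t k k)) hxk]

lemma sol_pos
    (hAcoop : ∀ t, ∀ k j : Fin K, k ≠ j → 0 ≤ A t k j)
    {x : ℝ → Fin K → ℝ}
    (hx : ∀ t k, HasDerivAt (fun s => x s k) ((A t).mulVec (x t) k) t)
    {b M : ℝ} (hM : ∀ t ∈ Icc (0:ℝ) b, ∀ k j, |A t k j| ≤ M)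
    (hnn : ∀ t ∈ Icc (0:ℝ) b, ∀ k, 0 ≤ x t k)
    (h0 : ∀ k, 0 < x 0 k) (hb : 0 ≤ b) :
    ∀ t ∈ Icc (0:ℝ) b, ∀ k, 0 < x t k := by
  intro t ht k
  have h := sol_expMono hAcoop hx hM hnn k (left_mem_Icc.2 hb) ht ht.1
  simp only [mul_zero, Real.exp_zero, one_mul] at h
  nlinarith [Real.exp_pos (M * t), h0 k, hnn t ht k]

lemma sol_of_U {U : ℝ → Matrix (Fin K) (Fin K) ℝ}
    (hUode : ∀ t k j, HasDerivAt (fun s => U s k j) ((A t * U t) k j) t)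
    (v : Fin K → ℝ) (t : ℝ) (k : Fin K) :
    HasDerivAt (fun s => (U s).mulVec v k) ((A t).mulVec ((U t).mulVec v) k) t := by
  have h : HasDerivAt (fun s => ∑ j, U s k j * v j) (∑ j, (A t * U t) k j * v j) t :=
    HasDerivAt.fun_sum (fun j _ => (hUode t k j).mul_const (v j))
  have h2 : (A t).mulVec ((U t).mulVec v) k = ∑ j, (A t * U t) k j * v j := by
    rw [Matrix.mulVec_mulVec]; rfl
  rw [h2]
  exact h

lemma UT_pos {T : ℝ} (hT : 0 < T)
    (hAcont : ∀ k j, Continuous fun t => A t k j)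
    (hAcoop : ∀ t, ∀ k j : Fin K, k ≠ j → 0 ≤ A t k j)
    (hAirr : ∀ S : Set (Fin K), S.Nonempty → Sᶜ.Nonempty → ∀ t,
      ∃ k ∈ S, ∃ j ∈ Sᶜ, A t k j ≠ 0)
    {U : ℝ → Matrix (Fin K) (Fin K) ℝ}
    (hU0 : U 0 = 1)
    (hUode : ∀ t k j, HasDerivAt (fun s => U s k j) ((A t * U t) k j) t)
    (hnonneg : ∀ (w : Fin K → ℝ), (∀ k, 0 ≤ w k) →
      ∀ t ∈ Icc (0:ℝ) T, ∀ k, 0 ≤ (U t).mulVec w k)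
    {M : ℝ} (hM : ∀ t ∈ Icc (0:ℝ) T, ∀ k j, |A t k j| ≤ M)
    (j : Fin K) : ∀ k, 0 < U T k j := by
  set x : ℝ → Fin K → ℝ := fun t => (U t).mulVec (Pi.single j 1) with hxdef
  have hx : ∀ t k, HasDerivAt (fun s => x s k) ((A t).mulVec (x t) k) t :=
    fun t k => sol_of_U hUode _ t k
  have hxc : ∀ k, Continuous fun t => x t k :=
    fun k => continuous_iff_continuousAt.2 fun t => (hx t k).continuousAt
  have hsingle : ∀ k, 0 ≤ (Pi.single j (1:ℝ) : Fin K → ℝ) k := by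
    intro k
    rcases eq_or_ne k j with h | h
    · subst h; simp
    · simp [Pi.single_eq_of_ne h]
  have hx0 : x 0 = Pi.single j 1 := by
    show U 0 *ᵥ Pi.single j 1 = Pi.single j 1
    rw [hU0, Matrix.one_mulVec]
  have hxnn : ∀ t ∈ Icc (0:ℝ) T, ∀ k, 0 ≤ x t k := hnonneg _ hsingle
  have hmono := fun k => sol_expMono hAcoop hx hM hxnn k
  have hTI : T ∈ Icc (0:ℝ) T := right_mem_Icc.2 hT.le
  have h0I : (0:ℝ) ∈ Icc (0:ℝ) T := left_mem_Icc.2 hT.le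
  set Sset : Set (Fin K) := {k | 0 < x T k} with hSdef
  have hjS : j ∈ Sset := by
    have h := hmono j h0I hTI hT.le
    simp only [mul_zero, Real.exp_zero, one_mul] at h
    rw [hx0] at h
    simp only [Pi.single_eq_same] at h
    have : (0:ℝ) < 1 := one_pos
    show 0 < x T j
    nlinarith [Real.exp_pos (M * T)]
  have hxT : ∀ k, 0 < x T k := by
    by_contra hcon
    push_neg at hcon
    obtain ⟨k₀, hk₀⟩ := hcon
    have hk₀' : k₀ ∈ Ssetᶜ := by
      simp only [hSdef, mem_compl_iff, mem_setOf_eq, not_lt]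
      exact hk₀
    have hzero : ∀ k, k ∉ Sset → ∀ t ∈ Icc (0:ℝ) T, x t k = 0 := by
      intro k hk t ht
      have hxTk : x T k = 0 :=
        le_antisymm (not_lt.1 hk) (hxnn T hTI k)
      have h : Real.exp (M * t) * x t k ≤ Real.exp (M * T) * x T k :=
        hmono k ht hTI ht.2
      rw [hxTk, mul_zero] at h
      nlinarith [Real.exp_pos (M * t), hxnn t ht k]
    have hterm : ∀ k, k ∉ Sset → ∀ t ∈ Ioo (0:ℝ) T, ∀ m, A t k m * x t m = 0 := by
      intro k hk t ht
      have hconst : (fun s => x s k) =ᶠ[𝓝 t] fun _ => 0 := by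
        filter_upwards [isOpen_Ioo.mem_nhds ht] with s hs
        exact hzero k hk s ⟨hs.1.le, hs.2.le⟩
      have der0 : HasDerivAt (fun s => x s k) 0 t :=
        (hasDerivAt_const t (0:ℝ)).congr_of_eventuallyEq hconst
      have huniq : (A t).mulVec (x t) k = 0 := (hx t k).unique der0
      have hrw : (A t).mulVec (x t) k = ∑ m, A t k m * x t m := rfl
      rw [hrw] at huniq
      have hnn' : ∀ m ∈ Finset.univ, 0 ≤ A t k m * x t m := by
        intro m _
        rcases eq_or_ne m k with h | h
        · rw [h, hzero k hk t ⟨ht.1.le, ht.2.le⟩, mul_zero]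
        · exact mul_nonneg (hAcoop t k m (Ne.symm h)) (hxnn t ⟨ht.1.le, ht.2.le⟩ m)
      exact fun m => (Finset.sum_eq_zero_iff_of_nonneg hnn').1 huniq m (Finset.mem_univ m)
    -- pick t₁ close to T where all S-components positive
    have hev : ∀ᶠ t in 𝓝[<] T, ∀ m : Fin K, m ∈ Sset → 0 < x t m := by
      rw [eventually_all]
      intro m
      by_cases hm : m ∈ Sset
      · have : Tendsto (fun t => x t m) (𝓝[<] T) (𝓝 (x T m)) :=
          ((hxc m).tendsto T).mono_left (nhdsWithin_le_nhds : 𝓝[<] T ≤ 𝓝 T)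
        filter_upwards [this.eventually (eventually_gt_nhds hm)] with t ht _
        exact ht
      · filter_upwards with t hm'
        exact absurd hm' hm
    have hev2 : ∀ᶠ t in 𝓝[<] T, t ∈ Ioi (0:ℝ) :=
      eventually_nhdsWithin_of_eventually_nhds (Ioi_mem_nhds hT)
    have hev3 : ∀ᶠ t in 𝓝[<] T, t < T := eventually_mem_nhdsWithin
    obtain ⟨t₁, hpos₁, ht₁0, ht₁T⟩ := (hev.and (hev2.and hev3)).exists
    have hSc : (Ssetᶜ : Set (Fin K)).Nonempty := ⟨k₀, hk₀'⟩
    have hScc : (Ssetᶜᶜ : Set (Fin K)).Nonempty := by rw [compl_compl]; exact ⟨j, hjS⟩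
    obtain ⟨k, hkSc, m, hmScc, hA⟩ := hAirr Ssetᶜ hSc hScc t₁
    rw [compl_compl] at hmScc
    have hkm : k ≠ m := by
      intro h; rw [h] at hkSc; exact hkSc hmScc
    have hApos : 0 < A t₁ k m := lt_of_le_of_ne (hAcoop t₁ k m hkm) (Ne.symm hA)
    have hxm : 0 < x t₁ m := hpos₁ m hmScc
    have := hterm k hkSc t₁ ⟨ht₁0, ht₁T⟩ m
    nlinarith
  intro k
  have h := hxT k
  have hrw : x T k = U T k j := by
    rw [hxdef]
    simp [Matrix.mulVec_single]
  rwa [hrw] at h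

end Chunk2

section Chunk3

variable {K : ℕ} {A : ℝ → Matrix (Fin K) (Fin K) ℝ}

lemma mulVec_norm_le {P : Matrix (Fin K) (Fin K) ℝ} {M : ℝ} (hM0 : 0 ≤ M)
    (hP : ∀ k j, |P k j| ≤ M) (u : Fin K → ℝ) :
    ‖P.mulVec u‖ ≤ (K * M) * ‖u‖ := by
  have hbound : (0:ℝ) ≤ K * M * ‖u‖ := by positivity
  rw [pi_norm_le_iff_of_nonneg hbound]
  intro i
  have h1 : ‖(P.mulVec u) i‖ = |∑ j, P i j * u j| := rfl
  rw [h1]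
  calc |∑ j, P i j * u j| ≤ ∑ j, |P i j * u j| := Finset.abs_sum_le_sum_abs _ _
    _ ≤ ∑ _j : Fin K, M * ‖u‖ := by
        refine Finset.sum_le_sum fun j _ => ?_
        rw [abs_mul]
        have h2 : |u j| ≤ ‖u‖ := by
          have := norm_le_pi_norm u j
          simpa using this
        exact mul_le_mul (hP i j) h2 (abs_nonneg _) hM0
    _ = K * M * ‖u‖ := by simp [Finset.sum_const, mul_assoc]

lemma sol_unique
    (hAcont : ∀ k j, Continuous fun t => A t k j)
    {x y : ℝ → Fin K → ℝ}
    (hx : ∀ t k, HasDerivAt (fun s => x s k) ((A t).mulVec (x t) k) t)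
    (hy : ∀ t k, HasDerivAt (fun s => y s k) ((A t).mulVec (y t) k) t)
    (h0 : x 0 = y 0) : ∀ t, x t = y t := by
  intro t
  set a : ℝ := -(|t| + 1) with ha
  set b : ℝ := |t| + 1 with hb
  have habs := abs_nonneg t
  have hab : a ≤ b := by rw [ha, hb]; linarith
  have h0ab : (0:ℝ) ∈ Ioo a b := ⟨by rw [ha]; linarith, by rw [hb]; linarith⟩
  have htab : t ∈ Icc a b := ⟨by rw [ha]; linarith [neg_abs_le t],
    by rw [hb]; linarith [le_abs_self t]⟩
  obtain ⟨M, hM0, hM⟩ := abound A hAcont a b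
  set proj : ℝ → ℝ := fun s => max a (min b s) with hproj
  have hproj_mem : ∀ s, proj s ∈ Icc a b :=
    fun s => ⟨le_max_left _ _, max_le hab (min_le_left _ _)⟩
  have hproj_id : ∀ s ∈ Ioo a b, proj s = s := by
    intro s hs
    rw [hproj]
    simp only
    rw [min_eq_right hs.2.le, max_eq_right hs.1.le]
  set v : ℝ → (Fin K → ℝ) → (Fin K → ℝ) := fun s z => (A (proj s)).mulVec z with hv
  set Kc : NNReal := Real.toNNReal (K * M) with hKc
  have hlip : ∀ s, LipschitzOnWith Kc (v s) univ := by
    intro s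
    refine LipschitzWith.lipschitzOnWith (LipschitzWith.of_dist_le_mul fun z w => ?_)
    have h1 : v s z - v s w = (A (proj s)).mulVec (z - w) := by
      rw [hv]; simp only; rw [Matrix.mulVec_sub]
    rw [dist_eq_norm, dist_eq_norm, h1]
    have h2 := mulVec_norm_le hM0 (fun k j => hM (proj s) (hproj_mem s) k j) (z - w)
    calc ‖(A (proj s)).mulVec (z - w)‖ ≤ (K * M) * ‖z - w‖ := h2
      _ ≤ (Kc : ℝ) * ‖z - w‖ := by
          refine mul_le_mul_of_nonneg_right ?_ (norm_nonneg _)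
          rw [hKc, Real.coe_toNNReal']
          exact le_max_left _ _
  have hxc : ContinuousOn x (Icc a b) :=
    (continuous_pi fun k => continuous_iff_continuousAt.2
      fun s => (hx s k).continuousAt).continuousOn
  have hyc : ContinuousOn y (Icc a b) :=
    (continuous_pi fun k => continuous_iff_continuousAt.2
      fun s => (hy s k).continuousAt).continuousOn
  have hx' : ∀ s ∈ Ioo a b, HasDerivAt x (v s (x s)) s := by
    intro s hs
    refine hasDerivAt_pi.2 fun k => ?_
    have : v s (x s) k = (A s).mulVec (x s) k := by rw [hv]; simp only [hproj_id s hs]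
    rw [this]
    exact hx s k
  have hy' : ∀ s ∈ Ioo a b, HasDerivAt y (v s (y s)) s := by
    intro s hs
    refine hasDerivAt_pi.2 fun k => ?_
    have : v s (y s) k = (A s).mulVec (y s) k := by rw [hv]; simp only [hproj_id s hs]
    rw [this]
    exact hy s k
  exact ODE_solution_unique_of_mem_Icc (v := v) (s := fun _ => univ) (fun s _ => hlip s)
    h0ab hxc hx' (fun _ _ => mem_univ _) hyc hy' (fun _ _ => mem_univ _) h0 htab

end Chunk3

section Perron

attribute [local instance] Matrix.linftyOpNormedAddCommGroup Matrix.linftyOpNormedRing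
  Matrix.linftyOpNormedAlgebra

noncomputable local instance {K : ℕ} : CompleteSpace (Matrix (Fin K) (Fin K) ℂ) :=
  FiniteDimensional.complete ℂ _

lemma no_growth {K : ℕ} (hK : 0 < K) {P : Matrix (Fin K) (Fin K) ℝ}
    (hPnn : ∀ k j, 0 ≤ P k j) {r : ℝ} (hr0 : 0 ≤ r)
    (hub : ∀ μ : ℂ, (∃ u : Fin K → ℂ, u ≠ 0 ∧
      (P.map ((↑) : ℝ → ℂ)).mulVec u = μ • u) → ‖μ‖ ≤ r)
    {y : Fin K → ℝ} (hy : ∀ k, 0 < y k) {ε : ℝ} (hε : 0 < ε)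
    (hgrow : ∀ k, (r + ε) * y k ≤ P.mulVec y k) : False := by
  set Q : Matrix (Fin K) (Fin K) ℂ := P.map ((↑) : ℝ → ℂ) with hQ
  -- spectral radius bounded by r
  have hsp : spectralRadius ℂ Q ≤ ENNReal.ofReal r := by
    rw [show spectralRadius ℂ Q = (⨆ μ ∈ spectrum ℂ Q, (‖μ‖₊ : ℝ≥0∞)) from rfl]
    refine iSup₂_le fun μ hμ => ?_
    have hdet : (algebraMap ℂ (Matrix (Fin K) (Fin K) ℂ) μ - Q).det = 0 := by
      by_contra hd
      exact (spectrum.mem_iff.1 hμ) ((Matrix.isUnit_iff_isUnit_det _).2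
        (isUnit_iff_ne_zero.2 hd))
    obtain ⟨u, hu0, hu⟩ := (Matrix.exists_mulVec_eq_zero_iff).2 hdet
    have heig : Q.mulVec u = μ • u := by
      have h1 : (algebraMap ℂ (Matrix (Fin K) (Fin K) ℂ) μ - Q).mulVec u
          = μ • u - Q.mulVec u := by
        rw [Matrix.sub_mulVec]
        congr 1
        funext k
        simp [Matrix.mulVec, dotProduct, Matrix.algebraMap_matrix_apply,
          ite_mul, Finset.sum_ite_eq, Pi.smul_apply, smul_eq_mul]
      rw [h1] at hu
      exact (sub_eq_zero.1 hu).symm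
    have habs : ‖μ‖ ≤ r := hub μ ⟨u, hu0, heig⟩
    calc (‖μ‖₊ : ℝ≥0∞) = ENNReal.ofReal ‖μ‖ := (ofReal_norm μ).symm
      _ ≤ ENNReal.ofReal r := ENNReal.ofReal_le_ofReal habs
  -- powers of Q
  have hQpow : ∀ n : ℕ, Q ^ n = (P ^ n).map ((↑) : ℝ → ℂ) := by
    intro n
    induction n with
    | zero =>
      rw [pow_zero, pow_zero]
      exact (Matrix.map_one _ (by simp) (by simp)).symm
    | succ n ih =>
      rw [pow_succ, pow_succ, ih]
      ext k j
      simp only [Matrix.mul_apply, Matrix.map_apply]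
      push_cast
      rfl
  have hPn : ∀ n (k j : Fin K), 0 ≤ (P ^ n) k j := by
    intro n
    induction n with
    | zero =>
      intro k j
      rw [pow_zero]
      rcases eq_or_ne k j with h | h
      · simp [Matrix.one_apply, h]
      · simp [Matrix.one_apply, h]
    | succ n ih =>
      intro k j
      rw [pow_succ, Matrix.mul_apply]
      exact Finset.sum_nonneg fun m _ => mul_nonneg (ih k m) (hPnn m j)
  have hrε : 0 < r + ε := by linarith
  have hmv : ∀ (R : Matrix (Fin K) (Fin K) ℝ) (v : Fin K → ℝ) k,
      R.mulVec v k = ∑ j, R k j * v j := fun _ _ _ => rfl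
  have hgrown : ∀ n (k : Fin K), (r + ε) ^ n * y k ≤ (P ^ n).mulVec y k := by
    intro n
    induction n with
    | zero => intro k; rw [pow_zero, pow_zero, Matrix.one_mulVec, one_mul]
    | succ n ih =>
      intro k
      have hstep : (P ^ (n+1)).mulVec y k = ∑ j, P k j * ((P ^ n).mulVec y j) := by
        rw [pow_succ', ← Matrix.mulVec_mulVec]
        exact hmv _ _ _
      rw [hstep]
      have h2 : (r+ε)^n * ((r+ε) * y k) ≤ (r+ε)^n * (P.mulVec y k) :=
        mul_le_mul_of_nonneg_left (hgrow k) (by positivity)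
      calc (r+ε)^(n+1) * y k = (r+ε)^n * ((r+ε) * y k) := by ring
        _ ≤ (r+ε)^n * (P.mulVec y k) := h2
        _ = ∑ j, P k j * ((r+ε)^n * y j) := by
            rw [hmv, Finset.mul_sum]
            exact Finset.sum_congr rfl fun j _ => by ring
        _ ≤ ∑ j, P k j * ((P ^ n).mulVec y j) :=
            Finset.sum_le_sum fun j _ => mul_le_mul_of_nonneg_left (ih j) (hPnn k j)
  -- min and max of y
  have hne : Nonempty (Fin K) := ⟨⟨0, hK⟩⟩
  have hfne : (Finset.univ : Finset (Fin K)).Nonempty := Finset.univ_nonempty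
  set c1 : ℝ := Finset.univ.inf' hfne y with hc1def
  set c2 : ℝ := Finset.univ.sup' hfne y with hc2def
  have hc1 : 0 < c1 := by
    rw [hc1def, Finset.lt_inf'_iff]
    exact fun k _ => hy k
  have hc2 : 0 < c2 := by
    obtain ⟨k⟩ := hne
    exact lt_of_lt_of_le (hy k) (Finset.le_sup' y (Finset.mem_univ k))
  set yc : Fin K → ℂ := fun k => (y k : ℂ) with hyc
  have hycn : ‖yc‖ ≤ c2 := by
    rw [pi_norm_le_iff_of_nonneg hc2.le]
    intro k
    rw [hyc]
    simp only [Complex.norm_real, Real.norm_eq_abs, abs_of_pos (hy k)]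
    exact Finset.le_sup' y (Finset.mem_univ k)
  have hQny : ∀ n (k : Fin K), (Q ^ n).mulVec yc k = ((P ^ n).mulVec y k : ℝ) := by
    intro n k
    rw [hQpow]
    simp only [Matrix.mulVec, dotProduct, Matrix.map_apply, hyc]
    push_cast
    rfl
  have hQn_lb : ∀ n : ℕ, (r + ε) ^ n * (c1 / c2) ≤ ‖Q ^ n‖ := by
    intro n
    obtain ⟨k⟩ := hne
    have h1 : (r + ε) ^ n * c1 ≤ (P ^ n).mulVec y k := by
      calc (r + ε) ^ n * c1 ≤ (r + ε) ^ n * y k :=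
            mul_le_mul_of_nonneg_left (Finset.inf'_le y (Finset.mem_univ k)) (by positivity)
        _ ≤ (P ^ n).mulVec y k := hgrown n k
    have h2 : (P ^ n).mulVec y k ≤ ‖(Q ^ n).mulVec yc‖ := by
      have h3 : ‖(Q ^ n).mulVec yc k‖ ≤ ‖(Q ^ n).mulVec yc‖ :=
        norm_le_pi_norm _ k
      rw [hQny n k] at h3
      have h4 : (P ^ n).mulVec y k ≤ ‖((P ^ n).mulVec y k : ℂ)‖ := by
        rw [Complex.norm_real, Real.norm_eq_abs]
        exact le_abs_self _
      exact h4.trans h3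
    have h5 : ‖(Q ^ n).mulVec yc‖ ≤ ‖Q ^ n‖ * c2 := by
      calc ‖(Q ^ n).mulVec yc‖ ≤ ‖Q ^ n‖ * ‖yc‖ := Matrix.linfty_opNorm_mulVec _ _
        _ ≤ ‖Q ^ n‖ * c2 := mul_le_mul_of_nonneg_left hycn (norm_nonneg _)
    have h6 := h1.trans (h2.trans h5)
    have h7 : (r + ε) ^ n * (c1 / c2) = ((r + ε) ^ n * c1) / c2 := by ring
    rw [h7, div_le_iff₀ hc2]
    exact h6
  -- Gelfand
  have hlim := spectrum.pow_norm_pow_one_div_tendsto_nhds_spectralRadius Q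
  set g : ℕ → ℝ := fun n => (c1 / c2) ^ (1/(n:ℝ)) * (r + ε) with hg
  have hg_le : ∀ n : ℕ, 1 ≤ n → g n ≤ ‖Q ^ n‖ ^ (1/(n:ℝ)) := by
    intro n hn
    have hnne : (n:ℝ) ≠ 0 := Nat.cast_ne_zero.2 (by omega)
    have hcd : (0:ℝ) < c1 / c2 := by positivity
    have h1 : ((r + ε) ^ n * (c1 / c2)) ^ (1/(n:ℝ)) ≤ ‖Q ^ n‖ ^ (1/(n:ℝ)) :=
      Real.rpow_le_rpow (by positivity) (hQn_lb n) (by positivity)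
    have h2 : ((r + ε) ^ n * (c1 / c2)) ^ (1/(n:ℝ))
        = (r + ε) * (c1 / c2) ^ (1/(n:ℝ)) := by
      rw [Real.mul_rpow (by positivity) hcd.le]
      congr 1
      rw [← Real.rpow_natCast (r + ε) n, ← Real.rpow_mul hrε.le]
      rw [mul_one_div, div_self hnne, Real.rpow_one]
    rw [h2] at h1
    rw [hg]
    linarith [h1]
  have hgl : Tendsto g atTop (𝓝 (r + ε)) := by
    have hcd : (0:ℝ) < c1 / c2 := by positivity
    have h1 : Tendsto (fun n : ℕ => Real.log (c1/c2) * (1/(n:ℝ))) atTop (𝓝 0) := by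
      have := tendsto_one_div_atTop_nhds_zero_nat.const_mul (Real.log (c1/c2))
      simpa using this
    have h2 : Tendsto (fun n : ℕ => Real.exp (Real.log (c1/c2) * (1/(n:ℝ)))) atTop
        (𝓝 1) := by
      have := (Real.continuous_exp.tendsto 0).comp h1
      simpa [Function.comp_def] using this
    have h3 : g = fun n : ℕ => Real.exp (Real.log (c1/c2) * (1/(n:ℝ))) * (r + ε) := by
      funext n
      show (c1 / c2) ^ (1/(n:ℝ)) * (r + ε) = _
      rw [Real.rpow_def_of_pos hcd]
    rw [h3]
    have h4 := h2.mul_const (r + ε)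
    simpa using h4
  have hof : Tendsto (fun n : ℕ => ENNReal.ofReal (g n)) atTop
      (𝓝 (ENNReal.ofReal (r + ε))) := (ENNReal.continuous_ofReal.tendsto _).comp hgl
  have hle_ev : (fun n : ℕ => ENNReal.ofReal (g n)) ≤ᶠ[atTop]
      fun n : ℕ => ENNReal.ofReal (‖Q ^ n‖ ^ (1/(n:ℝ))) :=
    eventually_atTop.2 ⟨1, fun n hn => ENNReal.ofReal_le_ofReal (hg_le n hn)⟩
  have hkey : ENNReal.ofReal (r + ε) ≤ spectralRadius ℂ Q :=
    le_of_tendsto_of_tendsto hof hlim hle_ev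
  have : ENNReal.ofReal (r + ε) ≤ ENNReal.ofReal r := hkey.trans hsp
  rw [ENNReal.ofReal_le_ofReal_iff hr0] at this
  linarith

end Perron

lemma perron {K : ℕ} (hK : 0 < K) {P : Matrix (Fin K) (Fin K) ℝ}
    (hP : ∀ k j, 0 < P k j) {r : ℝ}
    (hr : IsGreatest {a : ℝ | ∃ μ : ℂ,
        (∃ v : Fin K → ℂ, v ≠ 0 ∧ (P.map ((↑) : ℝ → ℂ)).mulVec v = μ • v) ∧
        a = ‖μ‖} r) :
    0 < r ∧ ∃ v : Fin K → ℝ, (∀ k, 0 < v k) ∧ P.mulVec v = r • v := by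
  obtain ⟨⟨μ, ⟨u, hu0, huμ⟩, hμr⟩, hub'⟩ := hr
  have hub : ∀ ν : ℂ, (∃ w : Fin K → ℂ, w ≠ 0 ∧
      (P.map ((↑) : ℝ → ℂ)).mulVec w = ν • w) → ‖ν‖ ≤ r :=
    fun ν h => hub' ⟨ν, h, rfl⟩
  have hr0 : 0 ≤ r := by rw [hμr]; exact norm_nonneg _
  set Q : Matrix (Fin K) (Fin K) ℂ := P.map ((↑) : ℝ → ℂ) with hQ
  set w : Fin K → ℝ := fun k => ‖u k‖ with hw
  have hwnn : ∀ k, 0 ≤ w k := fun k => norm_nonneg _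
  obtain ⟨j0, hj0⟩ : ∃ j0, u j0 ≠ 0 := Function.ne_iff.1 hu0
  have hwj0 : 0 < w j0 := norm_pos_iff.2 hj0
  have hmv : ∀ (R : Matrix (Fin K) (Fin K) ℝ) (v : Fin K → ℝ) (k : Fin K),
      R.mulVec v k = ∑ j, R k j * v j := fun _ _ _ => rfl
  have hPw : ∀ k, r * w k ≤ P.mulVec w k := by
    intro k
    have h1 : Q.mulVec u k = μ * u k := by rw [huμ]; rfl
    have h2 : r * w k = ‖Q.mulVec u k‖ := by
      rw [h1, norm_mul, hμr, hw]
    have h3 : ‖Q.mulVec u k‖ ≤ ∑ j, P k j * w j := by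
      have h4 : Q.mulVec u k = ∑ j, ((P k j : ℂ)) * u j := rfl
      rw [h4]
      calc ‖∑ j, ((P k j : ℂ)) * u j‖
          ≤ ∑ j, ‖(P k j : ℂ) * u j‖ := norm_sum_le _ _
        _ = ∑ j, P k j * w j := by
            refine Finset.sum_congr rfl fun j _ => ?_
            rw [norm_mul, Complex.norm_real, Real.norm_eq_abs, abs_of_pos (hP k j), hw]
    rw [h2, hmv]
    exact h3
  -- positivity of P *ᵥ (nonneg, nonzero) vectors
  have hposmul : ∀ (z : Fin K → ℝ), (∀ k, 0 ≤ z k) → (∃ j, 0 < z j) →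
      ∀ k, 0 < P.mulVec z k := by
    intro z hznn ⟨j', hj'⟩ k
    rw [hmv]
    refine Finset.sum_pos' (fun j _ => mul_nonneg (hP k j).le (hznn j)) ?_
    exact ⟨j', Finset.mem_univ j', mul_pos (hP k j') hj'⟩
  by_cases heq : P.mulVec w = r • w
  · -- main case
    have hwk : ∀ k, 0 < P.mulVec w k := hposmul w hwnn ⟨j0, hwj0⟩
    have hrpos : 0 < r := by
      have h := hwk j0
      rw [heq] at h
      simp only [Pi.smul_apply, smul_eq_mul] at h
      nlinarith [hwnn j0]
    have hwpos : ∀ k, 0 < w k := by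
      intro k
      have h := hwk k
      rw [heq] at h
      simp only [Pi.smul_apply, smul_eq_mul] at h
      nlinarith [hwnn k]
    exact ⟨hrpos, w, hwpos, heq⟩
  · -- contradiction case
    exfalso
    set z : Fin K → ℝ := fun k => P.mulVec w k - r * w k with hz
    have hznn : ∀ k, 0 ≤ z k := fun k => by rw [hz]; simp only; linarith [hPw k]
    have hzex : ∃ j', 0 < z j' := by
      by_contra hc
      push_neg at hc
      apply heq
      funext k
      have h1 : z k = 0 := le_antisymm (hc k) (hznn k)
      rw [hz] at h1
      simp only at h1
      simp only [Pi.smul_apply, smul_eq_mul]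
      linarith
    set y : Fin K → ℝ := fun k => P.mulVec w k with hy
    have hypos : ∀ k, 0 < y k := hposmul w hwnn ⟨j0, hwj0⟩
    have hPz : ∀ k, 0 < P.mulVec z k := hposmul z hznn hzex
    have hPy : ∀ k, P.mulVec y k = r * y k + P.mulVec z k := by
      intro k
      rw [hmv, hmv]
      have : ∀ j, P k j * y j = r * (P k j * w j) + P k j * z j := by
        intro j
        rw [hy, hz]
        simp only
        ring
      rw [Finset.sum_congr rfl fun j _ => this j, Finset.sum_add_distrib,
        ← Finset.mul_sum]
      rfl
    have hne : Nonempty (Fin K) := ⟨⟨0, hK⟩⟩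
    have hfne : (Finset.univ : Finset (Fin K)).Nonempty := Finset.univ_nonempty
    set ε : ℝ := Finset.univ.inf' hfne (fun k => P.mulVec z k / y k) with hε
    have hεpos : 0 < ε := by
      rw [hε, Finset.lt_inf'_iff]
      exact fun k _ => div_pos (hPz k) (hypos k)
    have hgrow : ∀ k, (r + ε) * y k ≤ P.mulVec y k := by
      intro k
      have h1 : ε ≤ P.mulVec z k / y k :=
        Finset.inf'_le _ (Finset.mem_univ k)
      have h2 : ε * y k ≤ P.mulVec z k := by
        rw [← div_mul_cancel₀ (P.mulVec z k) (hypos k).ne']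
        exact mul_le_mul_of_nonneg_right h1 (hypos k).le
      rw [hPy k]
      nlinarith
    exact no_growth hK (fun k j => (hP k j).le) hr0 hub hypos hεpos hgrow

/-- For the fundamental matrix solution `U` of `U′ = A(t)U`,
`U(0) = I`, of a continuous, `T`-periodic, cooperative, strongly irreducible
system, the spectral radius `r` of the monodromy matrix `U(T)` is positive,
`U(T)` has an eigenvector `v ≫ 0` for the eigenvalue `r`, and with
`λ = (1/T) ln r`, the function `φ(t) = e^{−λt} U(t) v` is `T`-periodic,
strictly positive, and satisfies `−φ′(t) + A(t)φ(t) = λ φ(t)`. -/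
theorem stmt2 (K : ℕ) (hK : 2 ≤ K) (T : ℝ) (hT : 0 < T)
    (A : ℝ → Matrix (Fin K) (Fin K) ℝ)
    (hAcont : ∀ k j, Continuous fun t => A t k j)
    (hAper : ∀ t, A (t + T) = A t)
    (hAcoop : ∀ t, ∀ k j : Fin K, k ≠ j → 0 ≤ A t k j)
    (hAirr : ∀ S : Set (Fin K), S.Nonempty → Sᶜ.Nonempty → ∀ t,
      ∃ k ∈ S, ∃ j ∈ Sᶜ, A t k j ≠ 0)
    (U : ℝ → Matrix (Fin K) (Fin K) ℝ)
    (hU0 : U 0 = 1)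
    (hUode : ∀ t k j, HasDerivAt (fun s => U s k j) ((A t * U t) k j) t)
    (r : ℝ)
    (hr : IsGreatest {a : ℝ | ∃ μ : ℂ,
        (∃ v : Fin K → ℂ, v ≠ 0 ∧ ((U T).map ((↑) : ℝ → ℂ)).mulVec v = μ • v) ∧
        a = ‖μ‖} r) :
    0 < r ∧
    ∃ v : Fin K → ℝ, (∀ k, 0 < v k) ∧ (U T).mulVec v = r • v ∧
      (∀ t, (fun s => Real.exp (-(Real.log r / T) * s) • (U s).mulVec v) (t + T)
          = (fun s => Real.exp (-(Real.log r / T) * s) • (U s).mulVec v) t) ∧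
      (∀ t k, 0 < Real.exp (-(Real.log r / T) * t) * ((U t).mulVec v k)) ∧
      (∀ t, -deriv (fun s => Real.exp (-(Real.log r / T) * s) • (U s).mulVec v) t
          + (A t).mulVec (Real.exp (-(Real.log r / T) * t) • (U t).mulVec v)
          = (Real.log r / T) • (Real.exp (-(Real.log r / T) * t) • (U t).mulVec v)) := by
  have hKpos : 0 < K := by omega
  obtain ⟨M, hM0, hM⟩ := abound A hAcont 0 T
  have hnonneg : ∀ (w : Fin K → ℝ), (∀ k, 0 ≤ w k) →
      ∀ t ∈ Icc (0:ℝ) T, ∀ k, 0 ≤ (U t).mulVec w k := by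
    intro w hw
    refine sol_nonneg hAcont hAcoop (fun t k => sol_of_U hUode w t k) ?_
    intro k
    rw [hU0, Matrix.one_mulVec]
    exact hw k
  have hPpos : ∀ k j, 0 < U T k j :=
    fun k j => UT_pos hT hAcont hAcoop hAirr hU0 hUode hnonneg hM j k
  obtain ⟨hrpos, v, hvpos, hvec⟩ := perron hKpos hPpos hr
  set lgr : ℝ := Real.log r / T with hlgr
  set x : ℝ → Fin K → ℝ := fun s => (U s).mulVec v with hxdef
  have hx : ∀ t k, HasDerivAt (fun s => x s k) ((A t).mulVec (x t) k) t :=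
    fun t k => sol_of_U hUode v t k
  have hx0 : x 0 = v := by
    show (U 0).mulVec v = v
    rw [hU0, Matrix.one_mulVec]
  -- shift identity
  have hshift : ∀ t, x (t + T) = r • x t := by
    have hx1 : ∀ t k, HasDerivAt (fun s => x (s + T) k)
        ((A t).mulVec (x (t + T)) k) t := by
      intro t k
      have h := hx (t + T) k
      have h2 := h.comp t ((hasDerivAt_id t).add_const T)
      rw [hAper] at h2
      simpa [Function.comp_def] using h2
    have hx2 : ∀ t k, HasDerivAt (fun s => (r • x s) k)
        ((A t).mulVec (r • x t) k) t := by
      intro t k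
      have h := (hx t k).const_mul r
      have h3 : (A t).mulVec (r • x t) k = r * ((A t).mulVec (x t) k) := by
        rw [Matrix.mulVec_smul]
        rfl
      rw [h3]
      simpa [Pi.smul_apply, smul_eq_mul] using h
    have h0 : (fun t => x (t + T)) 0 = (fun t => r • x t) 0 := by
      simp only [zero_add]
      rw [hx0]
      show (U T).mulVec v = r • v
      exact hvec
    exact sol_unique hAcont hx1 hx2 h0
  have hTne : T ≠ 0 := hT.ne'
  have hscal : ∀ t : ℝ, Real.exp (-lgr * (t + T)) * r = Real.exp (-lgr * t) := by
    intro t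
    have h1 : -lgr * (t + T) = -lgr * t + -Real.log r := by
      rw [hlgr]; field_simp; ring
    rw [h1, Real.exp_add, Real.exp_neg, Real.exp_log hrpos, mul_assoc,
      inv_mul_cancel₀ hrpos.ne', mul_one]
  have hper : ∀ t, Real.exp (-lgr * (t + T)) • x (t + T) = Real.exp (-lgr * t) • x t := by
    intro t
    rw [hshift t, smul_smul, hscal t]
  -- positivity on [0, T]
  have hxnnT : ∀ t ∈ Icc (0:ℝ) T, ∀ k, 0 ≤ x t k := hnonneg v (fun k => (hvpos k).le)
  have hxposT : ∀ t ∈ Icc (0:ℝ) T, ∀ k, 0 < x t k := by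
    refine sol_pos hAcoop hx hM hxnnT ?_ hT.le
    intro k
    rw [hx0]
    exact hvpos k
  have hperiodic : Function.Periodic (fun s => Real.exp (-lgr * s) • x s) T := hper
  refine ⟨hrpos, v, hvpos, hvec, ?_, ?_, ?_⟩
  · intro t
    exact hper t
  · intro t k
    obtain ⟨s, hs, heqφ⟩ := hperiodic.exists_mem_Ico₀ hT t
    have h1 : Real.exp (-lgr * t) * x t k = Real.exp (-lgr * s) * x s k := by
      have := congrFun heqφ k
      simpa [Pi.smul_apply, smul_eq_mul] using this
    show 0 < Real.exp (-lgr * t) * x t k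
    rw [h1]
    exact mul_pos (Real.exp_pos _) (hxposT s ⟨hs.1, hs.2.le⟩ k)
  · intro t
    have hxpi : HasDerivAt x ((A t).mulVec (x t)) t := hasDerivAt_pi.2 (fun k => hx t k)
    have hc : HasDerivAt (fun s => Real.exp (-lgr * s)) (-lgr * Real.exp (-lgr * t)) t := by
      have h := ((hasDerivAt_id t).const_mul (-lgr)).exp
      convert h using 1
      show _ = Real.exp (-lgr * t) * (-lgr * 1); ring
      rfl
    have hφ : HasDerivAt (fun s => Real.exp (-lgr * s) • x s)
        (Real.exp (-lgr * t) • ((A t).mulVec (x t))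
          + (-lgr * Real.exp (-lgr * t)) • x t) t := hc.smul hxpi
    rw [hφ.deriv]
    rw [Matrix.mulVec_smul]
    funext k
    simp only [Pi.add_apply, Pi.neg_apply, Pi.smul_apply, smul_eq_mul]
    ring
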